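/- Let A be a unital ring, B a ring, and φ : M₂(A) → B a multiplicative map (φ(xy) = φ(x)φ(y) for all x, y ∈ M₂(A)) satisfying φ(1) = φ(e₁₁) + φ(e₂₂). Then for all a, b ∈ A and all 1 ≤ i, j ≤ 2, φ(a ⊗ e_{ij} + b ⊗ e_{ij}) = φ(a ⊗ e_{ij}) + φ(b ⊗ e_{ij}), and moreover φ(x) = Σ_{i,j=1}^{2} φ(x_{ij} ⊗ e_{ij}) for every matrix x = (x_{ij}) ∈ M₂(A). -/

import Mathlib

/-- Let `A` be a unital ring, `B` a ring, and
`φ : M₂(A) → B` a multiplicative map satisfying `φ(1) = φ(e₁₁) + φ(e₂₂)`.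
Then `φ` is additive on each entry slot, i.e.
`φ(a ⊗ e_{ij} + b ⊗ e_{ij}) = φ(a ⊗ e_{ij}) + φ(b ⊗ e_{ij})`, and
`φ(x) = Σ_{i,j} φ(x_{ij} ⊗ e_{ij})` for every matrix `x`. -/
theorem stmt_15 {A B : Type*} [Ring A] [Ring B]
    (φ : Matrix (Fin 2) (Fin 2) A → B)
    (hmul : ∀ x y, φ (x * y) = φ x * φ y)
    (hone : φ 1 = φ (Matrix.single 0 0 (1 : A)) +
      φ (Matrix.single 1 1 (1 : A))) :
    (∀ (a b : A) (i j : Fin 2),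
        φ (Matrix.single i j a + Matrix.single i j b) =
          φ (Matrix.single i j a) + φ (Matrix.single i j b)) ∧
      (∀ x : Matrix (Fin 2) (Fin 2) A,
        φ x = ∑ i : Fin 2, ∑ j : Fin 2,
          φ (Matrix.single i j (x i j))) := by
  -- φ(0) = 0
  have h0 : φ 0 = 0 := by
    have h1 : φ 0 = φ 0 + φ 0 := by
      calc φ 0 = φ (0 * 1) := by rw [zero_mul]
      _ = φ 0 * φ 1 := hmul _ _
      _ = φ 0 * φ (Matrix.single 0 0 (1 : A)) +
            φ 0 * φ (Matrix.single 1 1 (1 : A)) := by rw [hone, mul_add]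
      _ = φ (0 * Matrix.single 0 0 (1 : A)) +
            φ (0 * Matrix.single 1 1 (1 : A)) := by rw [hmul, hmul]
      _ = φ 0 + φ 0 := by rw [zero_mul, zero_mul]
    exact (left_eq_add.mp h1)
  -- Peirce-type compression
  have hx : ∀ (x : Matrix (Fin 2) (Fin 2) A) (k l : Fin 2),
      φ (Matrix.single k k 1) * φ x * φ (Matrix.single l l 1) =
        φ (Matrix.single k l (x k l)) := by
    intro x k l
    rw [← hmul, ← hmul]
    congr 1
    ext i j
    fin_cases i <;> fin_cases j <;> fin_cases k <;> fin_cases l <;>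
      simp [Matrix.mul_apply, Matrix.single, Fin.sum_univ_two]
  -- the decomposition formula
  have key : ∀ x : Matrix (Fin 2) (Fin 2) A,
      φ x = ∑ i : Fin 2, ∑ j : Fin 2, φ (Matrix.single i j (x i j)) := by
    intro x
    calc φ x = φ (1 * x * 1) := by rw [one_mul, mul_one]
    _ = φ 1 * φ x * φ 1 := by rw [hmul, hmul]
    _ = φ (Matrix.single 0 0 (x 0 0)) + φ (Matrix.single 0 1 (x 0 1)) +
        (φ (Matrix.single 1 0 (x 1 0)) + φ (Matrix.single 1 1 (x 1 1))) := by
        rw [hone]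
        simp only [add_mul, mul_add]
        rw [hx x 0 0, hx x 0 1, hx x 1 0, hx x 1 1]
        abel
    _ = _ := by simp [Fin.sum_univ_two]
  -- additivity on the (0,1) slot
  have h01 : ∀ a b : A, φ (Matrix.single 0 1 (a + b)) =
      φ (Matrix.single 0 1 a) + φ (Matrix.single 0 1 b) := by
    intro a b
    have hfac : ((Matrix.single 0 0 (1 : A) + Matrix.single 0 1 b :
          Matrix (Fin 2) (Fin 2) A)) *
        (Matrix.single 0 1 a + Matrix.single 1 1 (1 : A)) =
        Matrix.single 0 1 (a + b) := by
      ext i j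
      fin_cases i <;> fin_cases j <;>
        simp [Matrix.mul_apply, Matrix.single, Fin.sum_univ_two, add_comm]
    have hM : φ (Matrix.single 0 0 (1 : A) + Matrix.single 0 1 b) =
        φ (Matrix.single 0 0 (1 : A)) + φ (Matrix.single 0 1 b) := by
      rw [key]
      simp [Fin.sum_univ_two, Matrix.add_apply, h0]
    have hN : φ (Matrix.single 0 1 a + Matrix.single 1 1 (1 : A)) =
        φ (Matrix.single 0 1 a) + φ (Matrix.single 1 1 (1 : A)) := by
      rw [key]
      simp [Fin.sum_univ_two, Matrix.add_apply, h0]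
    calc φ (Matrix.single 0 1 (a + b))
        = φ ((Matrix.single 0 0 (1 : A) + Matrix.single 0 1 b) *
            (Matrix.single 0 1 a + Matrix.single 1 1 (1 : A))) := by
          rw [← hfac]
      _ = (φ (Matrix.single 0 0 (1 : A)) + φ (Matrix.single 0 1 b)) *
            (φ (Matrix.single 0 1 a) + φ (Matrix.single 1 1 (1 : A))) := by
          rw [hmul, hM, hN]
      _ = φ (Matrix.single 0 0 (1 : A) * Matrix.single 0 1 a) +
            φ (Matrix.single 0 0 (1 : A) * Matrix.single 1 1 (1 : A)) +
            (φ (Matrix.single 0 1 b * Matrix.single 0 1 a) +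
             φ (Matrix.single 0 1 b * Matrix.single 1 1 (1 : A))) := by
          simp only [add_mul, mul_add, ← hmul]
          abel
      _ = φ (Matrix.single 0 1 a) + φ (Matrix.single 0 1 b) := by
          rw [Matrix.single_mul_single_same, Matrix.single_mul_single_same,
            Matrix.single_mul_single_of_ne (c := (1 : A)) 0 0 1 (show (0 : Fin 2) ≠ 1 by decide) (1 : A),
            Matrix.single_mul_single_of_ne (c := b) 0 1 0 (show (1 : Fin 2) ≠ 0 by decide) a,
            h0, one_mul, mul_one]
          abel
  -- additivity on the (1,0) slot
  have h10 : ∀ a b : A, φ (Matrix.single 1 0 (a + b)) =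
      φ (Matrix.single 1 0 a) + φ (Matrix.single 1 0 b) := by
    intro a b
    have hfac : ((Matrix.single 1 1 (1 : A) + Matrix.single 1 0 b :
          Matrix (Fin 2) (Fin 2) A)) *
        (Matrix.single 1 0 a + Matrix.single 0 0 (1 : A)) =
        Matrix.single 1 0 (a + b) := by
      ext i j
      fin_cases i <;> fin_cases j <;>
        simp [Matrix.mul_apply, Matrix.single, Fin.sum_univ_two, add_comm]
    have hM : φ (Matrix.single 1 1 (1 : A) + Matrix.single 1 0 b) =
        φ (Matrix.single 1 0 b) + φ (Matrix.single 1 1 (1 : A)) := by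
      rw [key]
      simp [Fin.sum_univ_two, Matrix.add_apply, h0]
    have hN : φ (Matrix.single 1 0 a + Matrix.single 0 0 (1 : A)) =
        φ (Matrix.single 0 0 (1 : A)) + φ (Matrix.single 1 0 a) := by
      rw [key]
      simp [Fin.sum_univ_two, Matrix.add_apply, h0]
    calc φ (Matrix.single 1 0 (a + b))
        = φ ((Matrix.single 1 1 (1 : A) + Matrix.single 1 0 b) *
            (Matrix.single 1 0 a + Matrix.single 0 0 (1 : A))) := by
          rw [← hfac]
      _ = (φ (Matrix.single 1 0 b) + φ (Matrix.single 1 1 (1 : A))) *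
            (φ (Matrix.single 0 0 (1 : A)) + φ (Matrix.single 1 0 a)) := by
          rw [hmul, hM, hN]
      _ = φ (Matrix.single 1 0 b * Matrix.single 0 0 (1 : A)) +
            φ (Matrix.single 1 0 b * Matrix.single 1 0 a) +
            (φ (Matrix.single 1 1 (1 : A) * Matrix.single 0 0 (1 : A)) +
             φ (Matrix.single 1 1 (1 : A) * Matrix.single 1 0 a)) := by
          simp only [add_mul, mul_add, ← hmul]
          abel
      _ = φ (Matrix.single 1 0 a) + φ (Matrix.single 1 0 b) := by
          rw [Matrix.single_mul_single_same, Matrix.single_mul_single_same,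
            Matrix.single_mul_single_of_ne (c := b) 1 0 1 (show (0 : Fin 2) ≠ 1 by decide) a,
            Matrix.single_mul_single_of_ne (c := (1 : A)) 1 1 0 (show (1 : Fin 2) ≠ 0 by decide) (1 : A),
            h0, one_mul, mul_one]
          abel
  -- additivity on the (0,0) slot
  have h00 : ∀ a b : A, φ (Matrix.single 0 0 (a + b)) =
      φ (Matrix.single 0 0 a) + φ (Matrix.single 0 0 b) := by
    intro a b
    have h1 : (Matrix.single 0 0 (a + b) : Matrix (Fin 2) (Fin 2) A) =
        Matrix.single 0 1 (a + b) * Matrix.single 1 0 (1 : A) := by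
      rw [Matrix.single_mul_single_same, mul_one]
    rw [h1, hmul, h01, add_mul, ← hmul, ← hmul,
      Matrix.single_mul_single_same, Matrix.single_mul_single_same, mul_one, mul_one]
  -- additivity on the (1,1) slot
  have h11 : ∀ a b : A, φ (Matrix.single 1 1 (a + b)) =
      φ (Matrix.single 1 1 a) + φ (Matrix.single 1 1 b) := by
    intro a b
    have h1 : (Matrix.single 1 1 (a + b) : Matrix (Fin 2) (Fin 2) A) =
        Matrix.single 1 0 (1 : A) * Matrix.single 0 1 (a + b) := by
      rw [Matrix.single_mul_single_same, one_mul]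
    rw [h1, hmul, h01, mul_add, ← hmul, ← hmul,
      Matrix.single_mul_single_same, Matrix.single_mul_single_same, one_mul, one_mul]
  refine ⟨?_, key⟩
  intro a b i j
  rw [← Matrix.single_add]
  fin_cases i <;> fin_cases j
  · exact h00 a b
  · exact h01 a b
  · exact h10 a b
  · exact h11 a b
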